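/- Let D = (V, A) be a finite directed graph, and let F₋, F₊ : A → ℤ be integer-valued functions on the arcs and E₋, E₊ : V → ℤ be integer-valued functions on the vertices. Suppose there exists a flow f : A → ℝ such that F₋(a) ≤ f(a) ≤ F₊(a) for every arc a ∈ A and E₋(v) ≤ excess(f, v) ≤ E₊(v) for every vertex v ∈ V. Then there exists an integer-valued flow f′ : A → ℤ satisfying the same bounds: F₋(a) ≤ f′(a) ≤ F₊(a) for every a ∈ A and E₋(v) ≤ excess(f′, v) ≤ E₊(v) for every v ∈ V. -/

import Mathlib

/-- The excess of a flow `f` at a vertex `v` of the directed graph with arc set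
`A ⊆ V × V`: the inflow into `v` minus the outflow out of `v`. -/
def flowExcess {V : Type*} [DecidableEq V] {R : Type*} [AddCommGroup R]
    (A : Finset (V × V)) (f : V × V → R) (v : V) : R :=
  ∑ a ∈ A.filter (fun a => a.2 = v), f a - ∑ a ∈ A.filter (fun a => a.1 = v), f a

set_option linter.unusedSectionVars false
set_option linter.unreachableTactic false
set_option linter.unusedTactic false
namespace IntFlowAux

/-- `x` is not an integer. -/
def IFrac (x : ℝ) : Prop := ¬ ∃ n : ℤ, x = (n : ℝ)

lemma IFrac.floor_lt {x : ℝ} (h : IFrac x) : (⌊x⌋ : ℝ) < x :=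
  lt_of_le_of_ne (Int.floor_le x) fun he => h ⟨⌊x⌋, he.symm⟩

lemma IFrac.lt_ceil {x : ℝ} (h : IFrac x) : x < (⌈x⌉ : ℝ) :=
  lt_of_le_of_ne (Int.le_ceil x) fun he => h ⟨⌈x⌉, he⟩

lemma exists_int_sum {α : Type*} {s : Finset α} {g : α → ℝ}
    (h : ∀ a ∈ s, ∃ n : ℤ, g a = (n : ℝ)) : ∃ n : ℤ, ∑ a ∈ s, g a = (n : ℝ) := by
  classical
  induction s using Finset.induction_on with
  | empty => exact ⟨0, by simp⟩
  | @insert a s' hx ih =>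
    obtain ⟨m, hm⟩ := h a (Finset.mem_insert_self a s')
    obtain ⟨n, hn⟩ := ih fun b hb => h b (Finset.mem_insert_of_mem hb)
    exact ⟨m + n, by rw [Finset.sum_insert hx, hm, hn]; push_cast; ring⟩

lemma ifrac_add_int {x : ℝ} (h : IFrac x) (n : ℤ) : IFrac (x + n) := by
  rintro ⟨m, hm⟩
  exact h ⟨m - n, by push_cast; linarith⟩

lemma ifrac_of_int_add {x : ℝ} {n : ℤ} (h : IFrac ((n : ℝ) + x)) : IFrac x := by
  rintro ⟨m, hm⟩
  exact h ⟨n + m, by push_cast; linarith⟩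

lemma ifrac_neg {x : ℝ} (h : IFrac x) : IFrac (-x) := by
  rintro ⟨m, hm⟩
  exact h ⟨-m, by push_cast; linarith⟩

section Walks

variable {V : Type*} [DecidableEq V]

abbrev Step (V : Type*) := (V × V) × Bool

def stepTail (p : Step V) : V := if p.2 then p.1.1 else p.1.2
def stepHead (p : Step V) : V := if p.2 then p.1.2 else p.1.1
def signVal (s : Bool) : ℝ := if s then 1 else -1

def stepFlow (p : Step V) : V × V → ℝ := fun b => if b = p.1 then signVal p.2 else 0

def walkFlow : List (Step V) → (V × V → ℝ)
  | [] => fun _ => 0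
  | p :: L => fun b => stepFlow p b + walkFlow L b

def IsWalk : V → List (Step V) → V → Prop
  | u, [], v => u = v
  | u, p :: L, v => stepTail p = u ∧ IsWalk (stepHead p) L v

lemma isWalk_snoc {u v : V} {L : List (Step V)} (h : IsWalk u L v) (p : Step V)
    (hp : stepTail p = v) : IsWalk u (L ++ [p]) (stepHead p) := by
  induction L generalizing u with
  | nil => exact ⟨by rw [hp, h], rfl⟩
  | cons q L ih => exact ⟨h.1, ih h.2⟩

lemma isWalk_suffix {u v x : V} {L : List (Step V)} (h : IsWalk u L v)
    (hx : x ∈ u :: L.map stepHead) : ∃ L₂ : List (Step V), L₂.Sublist L ∧ IsWalk x L₂ v := by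
  induction L generalizing u with
  | nil =>
    simp only [List.map_nil, List.mem_singleton] at hx
    exact ⟨[], List.Sublist.refl _, by subst hx; exact h⟩
  | cons q L ih =>
    rcases List.mem_cons.mp hx with hx | hx
    · exact ⟨q :: L, List.Sublist.refl _, by subst hx; exact ⟨h.1, h.2⟩⟩
    · obtain ⟨L₂, hs, hw⟩ := ih h.2 hx
      exact ⟨L₂, hs.cons q, hw⟩

lemma isWalk_last_mem {u v : V} {L : List (Step V)} (h : IsWalk u L v) (hL : L ≠ []) :
    v ∈ L.map stepHead := by
  induction L generalizing u with
  | nil => exact absurd rfl hL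
  | cons q L ih =>
    rcases L with _ | ⟨r, L⟩
    · simp [IsWalk] at h
      simp [h.2]
    · simpa using Or.inr (ih h.2 (by simp))

end Walks

section Excess

variable {V : Type*} [DecidableEq V] (A : Finset (V × V))

lemma flowExcess_add_smul (f c : V × V → ℝ) (ε : ℝ) (x : V) :
    flowExcess A (fun b => f b + ε * c b) x
      = flowExcess A f x + ε * flowExcess A c x := by
  simp only [flowExcess, Finset.sum_add_distrib, Finset.mul_sum, mul_sub]
  ring

lemma sum_filter_eq_single {α : Type*} [DecidableEq α] (s : Finset α) (g : α → ℝ) (b : α)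
    (h : ∀ a ∈ s, a ≠ b → g a = 0) :
    ∑ a ∈ s, g a = if b ∈ s then g b else 0 := by
  by_cases hb : b ∈ s
  · rw [if_pos hb]
    exact Finset.sum_eq_single_of_mem b hb h
  · rw [if_neg hb]
    exact Finset.sum_eq_zero fun a ha => h a ha (fun he => hb (he ▸ ha))

lemma flowExcess_stepFlow (p : Step V) (hp : p.1 ∈ A) (x : V) :
    flowExcess A (stepFlow p) x
      = (if stepHead p = x then 1 else 0) - (if stepTail p = x then 1 else 0) := by
  have hin : ∑ a ∈ A.filter (fun a => a.2 = x), stepFlow p a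
      = if p.1.2 = x then signVal p.2 else 0 := by
    rw [sum_filter_eq_single _ _ p.1 (fun a _ ha => by simp [stepFlow, ha])]
    by_cases h2 : p.1.2 = x <;> simp [stepFlow, hp, h2]
  have hout : ∑ a ∈ A.filter (fun a => a.1 = x), stepFlow p a
      = if p.1.1 = x then signVal p.2 else 0 := by
    rw [sum_filter_eq_single _ _ p.1 (fun a _ ha => by simp [stepFlow, ha])]
    by_cases h1 : p.1.1 = x <;> simp [stepFlow, hp, h1]
  rw [flowExcess, hin, hout]
  rcases p with ⟨a, _ | _⟩ <;>
    · simp only [stepHead, stepTail, signVal]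
      split_ifs <;> simp_all <;> ring

lemma flowExcess_walkFlow {u v : V} {L : List (Step V)} (hw : IsWalk u L v)
    (hA : ∀ p ∈ L, p.1 ∈ A) (x : V) :
    flowExcess A (walkFlow L) x
      = (if v = x then 1 else 0) - (if u = x then 1 else 0) := by
  induction L generalizing u with
  | nil =>
    subst hw
    simp [walkFlow, flowExcess]
  | cons p L ih =>
    have : walkFlow (p :: L) = fun b => stepFlow p b + 1 * walkFlow L b := by
      funext b; simp [walkFlow]
    rw [this, flowExcess_add_smul, flowExcess_stepFlow A p (hA p (by simp)) x, hw.1,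
      ih hw.2 (fun q hq => hA q (by simp [hq])), one_mul]
    ring

lemma walkFlow_eval {L : List (Step V)} (hnd : (L.map Prod.fst).Nodup) (b : V × V) :
    (b ∉ L.map Prod.fst ∧ walkFlow L b = 0)
      ∨ ∃ s, (b, s) ∈ L ∧ walkFlow L b = signVal s := by
  induction L with
  | nil => exact Or.inl ⟨by simp, rfl⟩
  | cons p L ih =>
    simp only [List.map_cons, List.nodup_cons] at hnd
    by_cases hb : b = p.1
    · right
      refine ⟨p.2, by simp [hb], ?_⟩
      have h0 : walkFlow L b = 0 := by
        rcases ih hnd.2 with h | ⟨s, hs, _⟩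
        · exact h.2
        · exact absurd (hb ▸ List.mem_map_of_mem (f := Prod.fst) hs) hnd.1
      rw [hb] at h0 ⊢
      simp [walkFlow, stepFlow, h0]
    · rcases ih hnd.2 with h | ⟨s, hs, hval⟩
      · exact Or.inl ⟨by simp [hb, h.1], by simp [walkFlow, stepFlow, hb, h.2]⟩
      · exact Or.inr ⟨s, by simp [hs], by simp [walkFlow, stepFlow, hb, hval]⟩

end Excess

section Local

open scoped Classical

variable {V : Type*} [DecidableEq V] (A : Finset (V × V))

lemma ifrac_int_add (n : ℤ) {x : ℝ} (h : IFrac x) : IFrac ((n : ℝ) + x) := by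
  rintro ⟨m, hm⟩; exact h ⟨m - n, by push_cast; linarith⟩

lemma ifrac_int_sub (n : ℤ) {x : ℝ} (h : IFrac x) : IFrac ((n : ℝ) - x) := by
  rintro ⟨m, hm⟩; exact h ⟨n - m, by push_cast; linarith⟩

lemma flowExcess_sub' (f g : V × V → ℝ) (x : V) :
    flowExcess A (fun b => f b - g b) x = flowExcess A f x - flowExcess A g x := by
  simp only [flowExcess, Finset.sum_sub_distrib]
  ring

lemma excess_decomp (f : V × V → ℝ) (v : V) :
    ∃ n : ℤ, flowExcess A f v
      = (n : ℝ) + flowExcess A (fun a => if a.1 ≠ a.2 ∧ IFrac (f a) then f a else 0) v := by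
  set fF : V × V → ℝ := fun a => if a.1 ≠ a.2 ∧ IFrac (f a) then f a else 0 with hfF
  suffices hint : ∃ n : ℤ, flowExcess A (fun b => f b - fF b) v = (n : ℝ) by
    obtain ⟨n, hn⟩ := hint
    refine ⟨n, ?_⟩
    rw [flowExcess_sub'] at hn
    linarith
  have key : ∀ w : V, ∑ a ∈ (A.filter (fun a => a.2 = w)).filter (fun a => a.1 = a.2),
      (f a - fF a) = ∑ a ∈ A.filter (fun a => a.1 = a.2 ∧ a.2 = w), f a := by
    intro w
    rw [Finset.filter_filter]
    refine Finset.sum_congr (by apply Finset.filter_congr; intro a _; tauto) ?_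
    intro a ha
    simp only [Finset.mem_filter] at ha
    simp [hfF, ha.2.1]
  have key2 : ∀ w : V, ∑ a ∈ (A.filter (fun a => a.1 = w)).filter (fun a => a.1 = a.2),
      (f a - fF a) = ∑ a ∈ A.filter (fun a => a.1 = a.2 ∧ a.2 = w), f a := by
    intro w
    rw [Finset.filter_filter]
    refine Finset.sum_congr ?_ ?_
    · apply Finset.filter_congr
      intro a _
      constructor
      · rintro ⟨h1, h2⟩
        exact ⟨h2, by rw [← h2]; exact h1⟩
      · rintro ⟨h1, h2⟩
        exact ⟨by rw [h1]; exact h2, h1⟩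
    intro a ha
    simp only [Finset.mem_filter] at ha
    simp [hfF, ha.2.1]
  have hintpart : ∀ s : Finset (V × V),
      ∃ n : ℤ, ∑ a ∈ s.filter (fun a => ¬ a.1 = a.2), (f a - fF a) = (n : ℝ) := by
    intro s
    apply exists_int_sum
    intro a ha
    simp only [Finset.mem_filter] at ha
    by_cases hfr : IFrac (f a)
    · exact ⟨0, by simp [hfF, ha.2, hfr]⟩
    · obtain ⟨n, hn⟩ := not_not.mp hfr
      refine ⟨n, ?_⟩
      have h0 : fF a = 0 := by
        simp only [hfF]
        exact if_neg (fun hcond => hfr hcond.2)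
      rw [h0, hn]
      ring
  obtain ⟨nIn, hnIn⟩ := hintpart (A.filter (fun a => a.2 = v))
  obtain ⟨nOut, hnOut⟩ := hintpart (A.filter (fun a => a.1 = v))
  refine ⟨nIn - nOut, ?_⟩
  have e1 := Finset.sum_filter_add_sum_filter_not (A.filter (fun a => a.2 = v))
    (fun a => a.1 = a.2) (fun a => f a - fF a)
  have e2 := Finset.sum_filter_add_sum_filter_not (A.filter (fun a => a.1 = v))
    (fun a => a.1 = a.2) (fun a => f a - fF a)
  rw [key v] at e1
  rw [key2 v] at e2
  rw [flowExcess]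
  push_cast
  rw [← e1, ← e2, hnIn, hnOut]
  ring

lemma exists_incident_of_ifrac_excess (f : V × V → ℝ) (v : V)
    (hv : IFrac (flowExcess A f v)) :
    ∃ b, b ∈ A ∧ IFrac (f b) ∧ b.1 ≠ b.2 ∧ (b.1 = v ∨ b.2 = v) := by
  by_contra hno
  push_neg at hno
  obtain ⟨n, hn⟩ := excess_decomp A f v
  apply hv
  refine ⟨n, ?_⟩
  rw [hn]
  have hz : ∀ s : Finset (V × V), (∀ a ∈ s, a ∈ A ∧ (a.1 = v ∨ a.2 = v)) →
      ∑ a ∈ s, (if a.1 ≠ a.2 ∧ IFrac (f a) then f a else 0) = 0 := by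
    intro s hs
    apply Finset.sum_eq_zero
    intro a ha
    obtain ⟨haA, hai⟩ := hs a ha
    by_cases hcond : a.1 ≠ a.2 ∧ IFrac (f a)
    · exact absurd hai (by simpa [hcond.2, hcond.1] using hno a haA)
    · simp [hcond]
  rw [flowExcess, hz _ (fun a ha => by simp only [Finset.mem_filter] at ha; exact ⟨ha.1, Or.inr ha.2⟩),
    hz _ (fun a ha => by simp only [Finset.mem_filter] at ha; exact ⟨ha.1, Or.inl ha.2⟩)]
  ring

lemma exists_next (f : V × V → ℝ) (v : V) (hv : ¬ IFrac (flowExcess A f v))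
    (c : V × V) (hc : c ∈ A) (hcf : IFrac (f c)) (hcl : c.1 ≠ c.2) (hci : c.1 = v ∨ c.2 = v) :
    ∃ b, b ∈ A ∧ IFrac (f b) ∧ b.1 ≠ b.2 ∧ (b.1 = v ∨ b.2 = v) ∧ b ≠ c := by
  by_contra hno
  push_neg at hno
  obtain ⟨n, hn⟩ := excess_decomp A f v
  set fF : V × V → ℝ := fun a => if a.1 ≠ a.2 ∧ IFrac (f a) then f a else 0 with hfF
  have hzero : ∀ a, a ∈ A → (a.1 = v ∨ a.2 = v) → a ≠ c → fF a = 0 := by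
    intro a haA hai hane
    by_cases hcond : a.1 ≠ a.2 ∧ IFrac (f a)
    · exact absurd (hno a haA hcond.2 hcond.1 hai) hane
    · simp [hfF, hcond]
  have hfFc : fF c = f c := by simp [hfF, hcl, hcf]
  have hIn : ∑ a ∈ A.filter (fun a => a.2 = v), fF a = if c.2 = v then f c else 0 := by
    rw [sum_filter_eq_single _ _ c (fun a ha hane => by
      simp only [Finset.mem_filter] at ha
      exact hzero a ha.1 (Or.inr ha.2) hane)]
    by_cases h2 : c.2 = v <;> simp [h2, hc, hfFc]
  have hOut : ∑ a ∈ A.filter (fun a => a.1 = v), fF a = if c.1 = v then f c else 0 := by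
    rw [sum_filter_eq_single _ _ c (fun a ha hane => by
      simp only [Finset.mem_filter] at ha
      exact hzero a ha.1 (Or.inl ha.2) hane)]
    by_cases h1 : c.1 = v <;> simp [h1, hc, hfFc]
  apply hv
  rw [hn, flowExcess, hIn, hOut]
  rcases hci with h1 | h2
  · rw [if_pos h1, if_neg (fun h2 => hcl (h1.trans h2.symm))]
    simpa [sub_eq_add_neg] using ifrac_int_sub n hcf
  · rw [if_pos h2, if_neg (fun h1 => hcl (h1.trans h2.symm))]
    simpa using ifrac_int_add n hcf

end Local

section Trail

open scoped Classical

variable {V : Type*} [DecidableEq V] [Fintype V]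

lemma step_endpoints (p : Step V) :
    (p.1.1 = stepTail p ∧ p.1.2 = stepHead p) ∨ (p.1.1 = stepHead p ∧ p.1.2 = stepTail p) := by
  rcases p with ⟨a, s⟩
  cases s
  · exact Or.inr ⟨rfl, rfl⟩
  · exact Or.inl ⟨rfl, rfl⟩

lemma stepHead_ne_stepTail {p : Step V} (h : p.1.1 ≠ p.1.2) : stepHead p ≠ stepTail p := by
  rcases step_endpoints p with ⟨h1, h2⟩ | ⟨h1, h2⟩
  · rw [← h1, ← h2]; exact fun he => h (he.symm)
  · rw [← h1, ← h2]; exact h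

def GoodTrail (A : Finset (V × V)) (f : V × V → ℝ) : Prop :=
  ∃ (u v : V) (L : List (Step V)), L ≠ [] ∧ IsWalk u L v ∧
    (∀ p ∈ L, p.1 ∈ A ∧ IFrac (f p.1)) ∧ (L.map Prod.fst).Nodup ∧
    (u = v ∨ (IFrac (flowExcess A f u) ∧ IFrac (flowExcess A f v)))

lemma trail_build (A : Finset (V × V)) (f : V × V → ℝ) (w : V)
    (hw : IFrac (flowExcess A f w) ∨ ∀ x : V, ¬ IFrac (flowExcess A f x)) :
    ∀ (n : ℕ) (L : List (Step V)) (v : V) (c : V × V),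
      IsWalk w L v →
      (∀ p ∈ L, p.1 ∈ A ∧ IFrac (f p.1) ∧ p.1.1 ≠ p.1.2) →
      (L.map Prod.fst).Nodup →
      (w :: L.map stepHead).Nodup →
      (∀ p ∈ L, p.1.1 ∈ w :: L.map stepHead ∧ p.1.2 ∈ w :: L.map stepHead) →
      c ∈ A → IFrac (f c) → c.1 ≠ c.2 → (c.1 = v ∨ c.2 = v) →
      (∀ p ∈ L, (p.1.1 = v ∨ p.1.2 = v) → p.1 = c) →
      c ∈ L.map Prod.fst →
      Fintype.card V + 1 ≤ (w :: L.map stepHead).length + n →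
      GoodTrail A f := by
  intro n
  induction n with
  | zero =>
    intro L v c hwalk hmem hndA hndV hvis hcA hcf hcl hci hlast hcL hfuel
    have hle := List.Nodup.length_le_card hndV
    simp only [List.length_cons] at hfuel hle
    omega
  | succ n ih =>
    intro L v c hwalk hmem hndA hndV hvis hcA hcf hcl hci hlast hcL hfuel
    have hLne : L ≠ [] := fun h => by simp [h] at hcL
    have hvmem : v ∈ L.map stepHead := isWalk_last_mem hwalk hLne
    by_cases hvfrac : IFrac (flowExcess A f v)
    · rcases hw with hwf | hnone
      · exact ⟨w, v, L, hLne, hwalk, fun p hp => ⟨(hmem p hp).1, (hmem p hp).2.1⟩, hndA,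
          Or.inr ⟨hwf, hvfrac⟩⟩
      · exact absurd hvfrac (hnone v)
    · obtain ⟨b, hbA, hbf, hbl, hbi, hbc⟩ := exists_next A f v hvfrac c hcA hcf hcl hci
      obtain ⟨q, hq1, hqtail, hqheadne⟩ :
          ∃ q : Step V, q.1 = b ∧ stepTail q = v ∧ stepHead q ≠ v := by
        by_cases hb1 : b.1 = v
        · refine ⟨(b, true), rfl, hb1, ?_⟩
          show b.2 ≠ v
          exact fun h => hbl (hb1.trans h.symm)
        · have hb2 : b.2 = v := hbi.resolve_left hb1
          refine ⟨(b, false), rfl, hb2, ?_⟩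
          show b.1 ≠ v
          exact hb1
      have hbnotin : b ∉ L.map Prod.fst := by
        intro hmem'
        obtain ⟨p, hpL, hpb⟩ := List.mem_map.mp hmem'
        apply hbc
        rw [← hpb]
        exact hlast p hpL (by rw [hpb]; exact hbi)
      have hwalk' : IsWalk w (L ++ [q]) (stepHead q) := isWalk_snoc hwalk q hqtail
      by_cases hfresh : stepHead q ∈ w :: L.map stepHead
      · -- found a cycle
        obtain ⟨L₂, hsub, hw2⟩ := isWalk_suffix hwalk hfresh
        refine ⟨stepHead q, stepHead q, L₂ ++ [q], by simp, isWalk_snoc hw2 q hqtail, ?_, ?_,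
          Or.inl rfl⟩
        · intro p hp
          rcases List.mem_append.mp hp with hp | hp
          · exact ⟨(hmem p (hsub.mem hp)).1, (hmem p (hsub.mem hp)).2.1⟩
          · rw [List.mem_singleton.mp hp, hq1]
            exact ⟨hbA, hbf⟩
        · rw [List.map_append]
          simp only [List.map_cons, List.map_nil]
          rw [List.nodup_append]
          refine ⟨hsub.map Prod.fst |>.nodup hndA, by simp, ?_⟩
          simp only [hq1, List.disjoint_singleton]
          intro x hx y hy hxy
          rw [List.mem_singleton] at hy
          rw [hxy, hy] at hx
          exact hbnotin ((hsub.map Prod.fst).mem hx)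
      · -- extend and recurse
        apply ih (L ++ [q]) (stepHead q) b hwalk'
        · intro p hp
          rcases List.mem_append.mp hp with hp | hp
          · exact hmem p hp
          · rw [List.mem_singleton.mp hp, hq1]
            exact ⟨hbA, hbf, hbl⟩
        · rw [List.map_append]
          simp only [List.map_cons, List.map_nil]
          rw [List.nodup_append]
          refine ⟨hndA, by simp, ?_⟩
          simp only [hq1, List.disjoint_singleton]
          intro x hx y hy hxy
          rw [List.mem_singleton] at hy
          rw [hxy, hy] at hx
          exact hbnotin hx
        · rw [List.map_append]
          simp only [List.map_cons, List.map_nil]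
          have : w :: (L.map stepHead ++ [stepHead q]) = (w :: L.map stepHead) ++ [stepHead q] := by
            simp
          rw [this, List.nodup_append]
          exact ⟨hndV, by simp, fun x hx y hy hxy => hfresh (by rw [List.mem_singleton] at hy; rw [hxy, hy] at hx; exact hx)⟩
        · intro p hp
          have hsup : ∀ x, x ∈ w :: L.map stepHead →
              x ∈ w :: (L ++ [q]).map stepHead := by
            intro x hx
            rw [List.map_append]
            rcases List.mem_cons.mp hx with hx | hx
            · exact List.mem_cons.mpr (Or.inl hx)
            · exact List.mem_cons.mpr (Or.inr (List.mem_append.mpr (Or.inl hx)))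
          have hheadmem : stepHead q ∈ w :: (L ++ [q]).map stepHead := by
            rw [List.map_append]
            simp
          have hvmem' : v ∈ w :: (L ++ [q]).map stepHead :=
            hsup v (List.mem_cons.mpr (Or.inr hvmem))
          rcases List.mem_append.mp hp with hp | hp
          · exact ⟨hsup _ (hvis p hp).1, hsup _ (hvis p hp).2⟩
          · rw [List.mem_singleton.mp hp]
            rcases step_endpoints q with ⟨h1, h2⟩ | ⟨h1, h2⟩
            · rw [h1, h2, hqtail]
              exact ⟨hvmem', hheadmem⟩
            · rw [h1, h2, hqtail]
              exact ⟨hheadmem, hvmem'⟩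
        · exact hbA
        · exact hbf
        · exact hbl
        · rcases step_endpoints q with ⟨h1, h2⟩ | ⟨h1, h2⟩
          · exact Or.inr (by rw [← hq1, h2])
          · exact Or.inl (by rw [← hq1, h1])
        · intro p hp hpinc
          rcases List.mem_append.mp hp with hp | hp
          · exfalso
            apply hfresh
            rcases hpinc with h | h
            · exact h ▸ (hvis p hp).1
            · exact h ▸ (hvis p hp).2
          · rw [List.mem_singleton.mp hp, hq1]
        · rw [List.map_append]
          simp [hq1]
        · have hlen : (w :: (L ++ [q]).map stepHead).length
              = (w :: L.map stepHead).length + 1 := by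
            simp
          omega

lemma trail_init (A : Finset (V × V)) (f : V × V → ℝ) (q : Step V)
    (hqA : q.1 ∈ A) (hqf : IFrac (f q.1)) (hql : q.1.1 ≠ q.1.2)
    (hw : IFrac (flowExcess A f (stepTail q)) ∨ ∀ x : V, ¬ IFrac (flowExcess A f x)) :
    GoodTrail A f := by
  have hne : stepHead q ≠ stepTail q := stepHead_ne_stepTail hql
  apply trail_build A f (stepTail q) hw (Fintype.card V) [q] (stepHead q) q.1
  · exact ⟨rfl, rfl⟩
  · intro p hp
    rw [List.mem_singleton.mp hp]
    exact ⟨hqA, hqf, hql⟩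
  · simp
  · simp [List.nodup_cons, hne.symm]
  · intro p hp
    rw [List.mem_singleton.mp hp]
    rcases step_endpoints q with ⟨h1, h2⟩ | ⟨h1, h2⟩
    · rw [h1, h2]; simp
    · rw [h1, h2]; simp
  · exact hqA
  · exact hqf
  · exact hql
  · rcases step_endpoints q with ⟨h1, h2⟩ | ⟨h1, h2⟩
    · exact Or.inr h2
    · exact Or.inl h1
  · intro p hp _
    rw [List.mem_singleton.mp hp]
  · simp
  · simp only [List.map_cons, List.map_nil, List.length_cons, List.length_nil]
    omega

lemma exists_good_trail (A : Finset (V × V)) (f : V × V → ℝ)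
    (hb : ∃ b, b ∈ A ∧ IFrac (f b) ∧ b.1 ≠ b.2) : GoodTrail A f := by
  by_cases hex : ∃ x, IFrac (flowExcess A f x)
  · obtain ⟨x, hx⟩ := hex
    obtain ⟨b, hbA, hbf, hbl, hbi⟩ := exists_incident_of_ifrac_excess A f x hx
    by_cases hb1 : b.1 = x
    · exact trail_init A f (b, true) hbA hbf hbl (Or.inl (by simpa [stepTail, hb1] using hx))
    · have hb2 : b.2 = x := hbi.resolve_left hb1
      exact trail_init A f (b, false) hbA hbf hbl (Or.inl (by simpa [stepTail, hb2] using hx))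
  · push_neg at hex
    obtain ⟨b, hbA, hbf, hbl⟩ := hb
    exact trail_init A f (b, true) hbA hbf hbl (Or.inr hex)

end Trail

section Push

open scoped Classical

variable {V : Type*} [DecidableEq V] [Fintype V]

noncomputable def room (f : V × V → ℝ) (p : Step V) : ℝ :=
  if p.2 then (⌈f p.1⌉ : ℝ) - f p.1 else f p.1 - (⌊f p.1⌋ : ℝ)

@[simp] lemma signVal_false : signVal false = -1 := by simp [signVal]
@[simp] lemma signVal_true : signVal true = 1 := by simp [signVal]
@[simp] lemma room_false (f : V × V → ℝ) (a : V × V) :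
    room f (a, false) = f a - (⌊f a⌋ : ℝ) := by simp [room]
@[simp] lemma room_true (f : V × V → ℝ) (a : V × V) :
    room f (a, true) = (⌈f a⌉ : ℝ) - f a := by simp [room]

lemma arc_tight (A : Finset (V × V)) (f : V × V → ℝ) {L : List (Step V)}
    (hmem : ∀ p ∈ L, p.1 ∈ A ∧ IFrac (f p.1)) (hndA : (L.map Prod.fst).Nodup)
    {ε : ℝ} {p : Step V} (hpL : p ∈ L) (hpr : room f p = ε) :
    ∃ b, b ∈ A ∧ IFrac (f b) ∧ ¬ IFrac (f b + ε * walkFlow L b) := by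
  refine ⟨p.1, (hmem p hpL).1, (hmem p hpL).2, ?_⟩
  rcases walkFlow_eval hndA p.1 with ⟨hnm, _⟩ | ⟨s, hsL, hval⟩
  · exact absurd (List.mem_map_of_mem (f := Prod.fst) hpL) hnm
  · have hps : p = (p.1, s) := List.inj_on_of_nodup_map hndA hpL hsL rfl
    rw [hps] at hpr
    rcases s with _ | _
    · intro hf
      apply hf
      refine ⟨⌊f p.1⌋, ?_⟩
      rw [hval]
      simp only [signVal_false, room_false] at hpr ⊢
      linarith
    · intro hf
      apply hf
      refine ⟨⌈f p.1⌉, ?_⟩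
      rw [hval]
      simp only [signVal_true, room_true] at hpr ⊢
      linarith

lemma push_lemma (A : Finset (V × V)) (f : V × V → ℝ) (hgt : GoodTrail A f) :
    ∃ g : V × V → ℝ,
      (∀ b, g b = f b ∨ (IFrac (f b) ∧ (⌊f b⌋ : ℝ) ≤ g b ∧ g b ≤ (⌈f b⌉ : ℝ))) ∧
      (∀ x, flowExcess A g x = flowExcess A f x ∨
        (IFrac (flowExcess A f x) ∧ (⌊flowExcess A f x⌋ : ℝ) ≤ flowExcess A g x ∧
          flowExcess A g x ≤ (⌈flowExcess A f x⌉ : ℝ))) ∧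
      ((∃ b, b ∈ A ∧ IFrac (f b) ∧ ¬ IFrac (g b)) ∨
        (∃ x, IFrac (flowExcess A f x) ∧ ¬ IFrac (flowExcess A g x))) := by
  obtain ⟨u, v, L, hLne, hwalk, hmem, hndA, hcase⟩ := hgt
  set eu := flowExcess A f u with heu
  set ev := flowExcess A f v with hev
  set R : Finset ℝ := (L.map (room f)).toFinset ∪
    (if u = v then ∅ else {(⌈ev⌉ : ℝ) - ev, eu - (⌊eu⌋ : ℝ)}) with hR
  have hRne : R.Nonempty := by
    rcases L with _ | ⟨p, L'⟩
    · exact absurd rfl hLne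
    · exact ⟨room f p, Finset.mem_union_left _ (by simp)⟩
  have hroom_pos : ∀ p ∈ L, 0 < room f p := by
    intro p hp
    have hfr : IFrac (f p.1) := (hmem p hp).2
    rcases p with ⟨a, _ | _⟩
    · simp only [room_false]
      linarith [hfr.floor_lt]
    · simp only [room_true]
      linarith [hfr.lt_ceil]
  have hpos : ∀ r ∈ R, 0 < r := by
    intro r hr
    rcases Finset.mem_union.mp hr with hr | hr
    · obtain ⟨p, hp, hpr⟩ := List.mem_map.mp (List.mem_toFinset.mp hr)
      exact hpr ▸ hroom_pos p hp
    · by_cases huv : u = v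
      · simp [huv] at hr
      · rw [if_neg huv] at hr
        obtain ⟨hufr, hvfr⟩ := hcase.resolve_left huv
        rcases Finset.mem_insert.mp hr with hr | hr
        · rw [hr]; linarith [hvfr.lt_ceil]
        · rw [Finset.mem_singleton.mp hr]; linarith [hufr.floor_lt]
  set ε := R.min' hRne with hε
  have hεpos : 0 < ε := hpos _ (R.min'_mem hRne)
  have hεle : ∀ r ∈ R, ε ≤ r := fun r hr => R.min'_le r hr
  have hεroom : ∀ p ∈ L, ε ≤ room f p := fun p hp =>
    hεle _ (Finset.mem_union_left _ (List.mem_toFinset.mpr (List.mem_map_of_mem (f := room f) hp)))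
  set g : V × V → ℝ := fun b => f b + ε * walkFlow L b with hg
  have hgval : ∀ b, g b = f b + ε * walkFlow L b := fun b => rfl
  have harcs : ∀ b, g b = f b ∨
      (IFrac (f b) ∧ (⌊f b⌋ : ℝ) ≤ g b ∧ g b ≤ (⌈f b⌉ : ℝ)) := by
    intro b
    rcases walkFlow_eval hndA b with ⟨_, h0⟩ | ⟨s, hsL, hval⟩
    · left
      rw [hgval b, h0]
      ring
    · right
      have hfr : IFrac (f b) := (hmem (b, s) hsL).2
      have hle := hεroom (b, s) hsL
      have hfl := Int.floor_le (f b)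
      have hce := Int.le_ceil (f b)
      refine ⟨hfr, ?_, ?_⟩ <;> rw [hgval b, hval] <;> rcases s with _ | _ <;>
        simp only [signVal_false, signVal_true, room_false, room_true] at hle ⊢ <;>
        linarith
  have hex : ∀ x, flowExcess A g x
      = flowExcess A f x + ε * ((if v = x then 1 else 0) - (if u = x then 1 else 0)) := by
    intro x
    rw [hg, flowExcess_add_smul, flowExcess_walkFlow A hwalk (fun p hp => (hmem p hp).1) x]
  by_cases huv : u = v
  · refine ⟨g, harcs, fun x => Or.inl (by rw [hex x, huv]; ring), Or.inl ?_⟩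
    have hmem' := R.min'_mem hRne
    rcases Finset.mem_union.mp hmem' with hr | hr
    · obtain ⟨p, hpL, hpr⟩ := List.mem_map.mp (List.mem_toFinset.mp hr)
      exact arc_tight A f hmem hndA hpL hpr
    · rw [if_pos huv] at hr
      exact absurd hr (Finset.notMem_empty _)
  · obtain ⟨hufr, hvfr⟩ := hcase.resolve_left huv
    have hεv : ε ≤ (⌈ev⌉ : ℝ) - ev := hεle _ (Finset.mem_union_right _
      (by rw [if_neg huv]; exact Finset.mem_insert_self _ _))
    have hεu : ε ≤ eu - (⌊eu⌋ : ℝ) := hεle _ (Finset.mem_union_right _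
      (by rw [if_neg huv]; exact Finset.mem_insert_of_mem (Finset.mem_singleton_self _)))
    have hexcess : ∀ x, flowExcess A g x = flowExcess A f x ∨
        (IFrac (flowExcess A f x) ∧ (⌊flowExcess A f x⌋ : ℝ) ≤ flowExcess A g x ∧
          flowExcess A g x ≤ (⌈flowExcess A f x⌉ : ℝ)) := by
      intro x
      by_cases hxv : v = x
      · right
        subst hxv
        rw [hex v, if_pos rfl, if_neg huv]
        refine ⟨hvfr, ?_, ?_⟩ <;> rw [← hev] <;>
          [linarith [hvfr.floor_lt]; linarith]
      · by_cases hxu : u = x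
        · right
          subst hxu
          rw [hex u, if_neg hxv, if_pos rfl]
          refine ⟨hufr, ?_, ?_⟩ <;> rw [← heu] <;>
            [linarith; linarith [hufr.lt_ceil]]
        · left
          rw [hex x, if_neg hxv, if_neg hxu]
          ring
    refine ⟨g, harcs, hexcess, ?_⟩
    have hmem' := R.min'_mem hRne
    rcases Finset.mem_union.mp hmem' with hr | hr
    · left
      obtain ⟨p, hpL, hpr⟩ := List.mem_map.mp (List.mem_toFinset.mp hr)
      exact arc_tight A f hmem hndA hpL hpr
    · right
      rw [if_neg huv] at hr
      rcases Finset.mem_insert.mp hr with hr | hr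
      · refine ⟨v, hvfr, fun hf => hf ⟨⌈ev⌉, ?_⟩⟩
        have hεr : ε = (⌈ev⌉ : ℝ) - ev := hε.trans hr
        rw [hex v, if_pos rfl, if_neg huv, ← hev]
        linarith
      · rw [Finset.mem_singleton] at hr
        refine ⟨u, hufr, fun hf => hf ⟨⌊eu⌋, ?_⟩⟩
        have hεr : ε = eu - (⌊eu⌋ : ℝ) := hε.trans hr
        rw [hex u, if_pos rfl, if_neg (fun h : v = u => huv h.symm), ← heu]
        linarith

end Push

section Main

open scoped Classical

variable {V : Type*} [Fintype V] [DecidableEq V]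

lemma integral_case (A : Finset (V × V)) (Fm Fp : V × V → ℤ) (Em Ep : V → ℤ)
    (f : V × V → ℝ)
    (hF : ∀ a ∈ A, (Fm a : ℝ) ≤ f a ∧ f a ≤ (Fp a : ℝ))
    (hE : ∀ v : V, (Em v : ℝ) ≤ flowExcess A f v ∧ flowExcess A f v ≤ (Ep v : ℝ))
    (hint : ∀ b ∈ A, ¬ IFrac (f b)) :
    ∃ f' : V × V → ℤ,
      (∀ a ∈ A, Fm a ≤ f' a ∧ f' a ≤ Fp a) ∧
      (∀ v : V, Em v ≤ flowExcess A f' v ∧ flowExcess A f' v ≤ Ep v) := by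
  refine ⟨fun a => ⌊f a⌋, ?_, ?_⟩
  · intro a ha
    refine ⟨Int.le_floor.mpr (hF a ha).1, ?_⟩
    have h := (Int.floor_le (f a)).trans (hF a ha).2
    exact_mod_cast h
  · intro v
    have h1 : ∀ s : Finset (V × V), (∀ a ∈ s, a ∈ A) →
        ∑ a ∈ s, ((⌊f a⌋ : ℤ) : ℝ) = ∑ a ∈ s, f a := by
      intro s hs
      apply Finset.sum_congr rfl
      intro a ha
      obtain ⟨n, hn⟩ := not_not.mp (hint a (hs a ha))
      rw [hn, Int.floor_intCast]
    have hkey : flowExcess A (fun a => ((⌊f a⌋ : ℤ) : ℝ)) v = flowExcess A f v := by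
      unfold flowExcess
      rw [h1 _ (fun a ha => (Finset.mem_filter.mp ha).1),
        h1 _ (fun a ha => (Finset.mem_filter.mp ha).1)]
    have hcast : ((flowExcess A (fun a => ⌊f a⌋) v : ℤ) : ℝ)
        = flowExcess A (fun a => ((⌊f a⌋ : ℤ) : ℝ)) v := by
      unfold flowExcess
      push_cast
      rfl
    constructor
    · have h : (Em v : ℝ) ≤ ((flowExcess A (fun a => ⌊f a⌋) v : ℤ) : ℝ) := by
        rw [hcast, hkey]; exact (hE v).1
      exact_mod_cast h
    · have h : ((flowExcess A (fun a => ⌊f a⌋) v : ℤ) : ℝ) ≤ (Ep v : ℝ) := by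
        rw [hcast, hkey]; exact (hE v).2
      exact_mod_cast h

lemma main_ind (A : Finset (V × V)) (Fm Fp : V × V → ℤ) (Em Ep : V → ℤ) :
    ∀ (N : ℕ) (f : V × V → ℝ),
      (A.filter fun a => IFrac (f a)).card
        + (Finset.univ.filter fun x => IFrac (flowExcess A f x)).card ≤ N →
      (∀ a ∈ A, (Fm a : ℝ) ≤ f a ∧ f a ≤ (Fp a : ℝ)) →
      (∀ v : V, (Em v : ℝ) ≤ flowExcess A f v ∧ flowExcess A f v ≤ (Ep v : ℝ)) →
      ∃ f' : V × V → ℤ,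
        (∀ a ∈ A, Fm a ≤ f' a ∧ f' a ≤ Fp a) ∧
        (∀ v : V, Em v ≤ flowExcess A f' v ∧ flowExcess A f' v ≤ Ep v) := by
  intro N
  induction N with
  | zero =>
    intro f hμ hF hE
    by_cases hfrac : ∃ b, b ∈ A ∧ IFrac (f b)
    · exfalso
      obtain ⟨b, hbA, hbf⟩ := hfrac
      have hmemf : b ∈ A.filter fun a => IFrac (f a) := Finset.mem_filter.mpr ⟨hbA, hbf⟩
      have h := Finset.card_pos.mpr ⟨b, hmemf⟩
      omega
    · push_neg at hfrac
      exact integral_case A Fm Fp Em Ep f hF hE hfrac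
  | succ N ih =>
    intro f hμ hF hE
    by_cases hfrac : ∃ b, b ∈ A ∧ IFrac (f b)
    · obtain ⟨b, hbA, hbf⟩ := hfrac
      have hgt : GoodTrail A f := by
        by_cases hbl : b.1 = b.2
        · refine ⟨b.2, b.1, [(b, false)], by simp, ⟨rfl, rfl⟩, ?_, by simp, Or.inl hbl.symm⟩
          intro p hp
          have hp' : p = (b, false) := List.mem_singleton.mp hp
          subst hp'
          exact ⟨hbA, hbf⟩
        · exact exists_good_trail A f ⟨b, hbA, hbf, hbl⟩
      obtain ⟨g, hga, hge, hstrict⟩ := push_lemma A f hgt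
      have hFg : ∀ a ∈ A, (Fm a : ℝ) ≤ g a ∧ g a ≤ (Fp a : ℝ) := by
        intro a ha
        rcases hga a with h | ⟨hfr, hlo, hhi⟩
        · rw [h]; exact hF a ha
        · constructor
          · exact le_trans (by exact_mod_cast Int.cast_le.mpr (Int.le_floor.mpr (hF a ha).1)) hlo
          · exact le_trans hhi (by exact_mod_cast Int.cast_le.mpr (Int.ceil_le.mpr (hF a ha).2))
      have hEg : ∀ v : V, (Em v : ℝ) ≤ flowExcess A g v ∧ flowExcess A g v ≤ (Ep v : ℝ) := by
        intro v
        rcases hge v with h | ⟨hfr, hlo, hhi⟩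
        · rw [h]; exact hE v
        · constructor
          · exact le_trans (by exact_mod_cast Int.cast_le.mpr (Int.le_floor.mpr (hE v).1)) hlo
          · exact le_trans hhi (by exact_mod_cast Int.cast_le.mpr (Int.ceil_le.mpr (hE v).2))
      have hsubA : (A.filter fun a => IFrac (g a)) ⊆ (A.filter fun a => IFrac (f a)) := by
        intro a ha
        rw [Finset.mem_filter] at ha ⊢
        refine ⟨ha.1, ?_⟩
        rcases hga a with h | ⟨hfr, _, _⟩
        · rw [← h]; exact ha.2
        · exact hfr
      have hsubE : (Finset.univ.filter fun x => IFrac (flowExcess A g x))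
          ⊆ (Finset.univ.filter fun x => IFrac (flowExcess A f x)) := by
        intro x hx
        rw [Finset.mem_filter] at hx ⊢
        refine ⟨hx.1, ?_⟩
        rcases hge x with h | ⟨hfr, _, _⟩
        · rw [← h]; exact hx.2
        · exact hfr
      have hμg : (A.filter fun a => IFrac (g a)).card
          + (Finset.univ.filter fun x => IFrac (flowExcess A g x)).card ≤ N := by
        have hle1 := Finset.card_le_card hsubA
        have hle2 := Finset.card_le_card hsubE
        rcases hstrict with ⟨b', hb'A, hb'f, hb'g⟩ | ⟨x, hxf, hxg⟩
        · have hlt : (A.filter fun a => IFrac (g a)).card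
              < (A.filter fun a => IFrac (f a)).card := by
            apply Finset.card_lt_card
            rw [Finset.ssubset_iff_of_subset hsubA]
            exact ⟨b', Finset.mem_filter.mpr ⟨hb'A, hb'f⟩,
              fun hmem => hb'g (Finset.mem_filter.mp hmem).2⟩
          omega
        · have hlt : (Finset.univ.filter fun x => IFrac (flowExcess A g x)).card
              < (Finset.univ.filter fun x => IFrac (flowExcess A f x)).card := by
            apply Finset.card_lt_card
            rw [Finset.ssubset_iff_of_subset hsubE]
            exact ⟨x, Finset.mem_filter.mpr ⟨Finset.mem_univ x, hxf⟩,
              fun hmem => hxg (Finset.mem_filter.mp hmem).2⟩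
          omega
      exact ih g hμg hFg hEg
    · push_neg at hfrac
      exact integral_case A Fm Fp Em Ep f hF hE hfrac

end Main

end IntFlowAux

open IntFlowAux

/-- **Integer rounding of flows.**
Let `D = (V, A)` be a finite directed graph, `F₋, F₊ : A → ℤ` integer bounds on the arcs and
`E₋, E₊ : V → ℤ` integer bounds on the vertices.  If there is a real-valued flow `f` with
`F₋(a) ≤ f(a) ≤ F₊(a)` for every arc `a` and `E₋(v) ≤ excess(f, v) ≤ E₊(v)` for every
vertex `v`, then there is an integer-valued flow `f'` satisfying the same bounds. -/
theorem exists_integer_flow_of_real_flow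
    {V : Type*} [Fintype V] [DecidableEq V]
    (A : Finset (V × V))
    (Fm Fp : V × V → ℤ) (Em Ep : V → ℤ)
    (f : V × V → ℝ)
    (hF : ∀ a ∈ A, (Fm a : ℝ) ≤ f a ∧ f a ≤ (Fp a : ℝ))
    (hE : ∀ v : V, (Em v : ℝ) ≤ flowExcess A f v ∧ flowExcess A f v ≤ (Ep v : ℝ)) :
    ∃ f' : V × V → ℤ,
      (∀ a ∈ A, Fm a ≤ f' a ∧ f' a ≤ Fp a) ∧
      (∀ v : V, Em v ≤ flowExcess A f' v ∧ flowExcess A f' v ≤ Ep v) := by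
  classical
  exact main_ind A Fm Fp Em Ep
    ((A.filter fun a => IFrac (f a)).card
      + (Finset.univ.filter fun x => IFrac (flowExcess A f x)).card) f le_rfl hF hE
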